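/- Let A be an ordered vector space and T : A → A a linear operator with 0 ≤ T ≤ I, meaning T x ≥ 0 and x − T x ≥ 0 for every x ≥ 0. If (x_ν) is a nondecreasing net in A with supremum x ∈ A, then (T x_ν) is a nondecreasing net with supremum T x. -/

import Mathlib

/-- Let `A` be an ordered vector space and `T : A → A` a linear operator with `0 ≤ T ≤ I`.
If `(x i)` is a nondecreasing net in `A` with supremum `s`, then `(T (x i))` is a
nondecreasing net with supremum `T s`. -/
theorem stmt1 {A : Type*} [AddCommGroup A] [PartialOrder A] [IsOrderedAddMonoid A] [Module ℝ A]
    (T : A →ₗ[ℝ] A)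
    (hT0 : ∀ x : A, 0 ≤ x → 0 ≤ T x)
    (hTI : ∀ x : A, 0 ≤ x → 0 ≤ x - T x)
    {ι : Type*} [Preorder ι] [IsDirected ι (· ≤ ·)] [Nonempty ι]
    (x : ι → A) (s : A) (hmono : Monotone x) (hsup : IsLUB (Set.range x) s) :
    Monotone (fun i => T (x i)) ∧ IsLUB (Set.range fun i => T (x i)) (T s) := by
  have hle : ∀ i, x i ≤ s := fun i => hsup.1 ⟨i, rfl⟩
  constructor
  · intro i j hij
    have h := hT0 _ (sub_nonneg.2 (hmono hij))
    rw [map_sub] at h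
    simpa using sub_nonneg.1 h
  constructor
  · rintro _ ⟨i, rfl⟩
    have h := hT0 _ (sub_nonneg.2 (hle i))
    rw [map_sub] at h
    exact sub_nonneg.1 h
  · intro b hb
    have key : ∀ i, x i ≤ s - T s + b := by
      intro i
      have h := hTI _ (sub_nonneg.2 (hle i))
      rw [map_sub] at h
      have h2 : x i ≤ s - T s + T (x i) := by
        have h' : (0:A) ≤ (s - T s + T (x i)) - x i := by
          rw [show (s - T s + T (x i)) - x i = s - x i - (T s - T (x i)) by abel]
          exact h
        exact sub_nonneg.1 h'
      have h3 : T (x i) ≤ b := hb ⟨i, rfl⟩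
      calc x i ≤ s - T s + T (x i) := h2
        _ ≤ s - T s + b := by exact add_le_add_right h3 _
    have hs : s ≤ s - T s + b := hsup.2 (by rintro _ ⟨i, rfl⟩; exact key i)
    have h' : (0:A) ≤ b - T s := by
      rw [show b - T s = (s - T s + b) - s by abel]
      exact sub_nonneg.2 hs
    exact sub_nonneg.1 h'
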